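/- Let n ≥ 1, N ≥ 1, and let σ : ℝⁿ → ℝⁿ satisfy the growth condition |σ(p)| ≤ c₁(|p| + 1) for all p ∈ ℝⁿ, where c₁ > 0. Let g be the convex hull of (a, b) ↦ |σ(a) − b|², let p, β ∈ ℝⁿ, and let Q ⊆ ℝᴺ be a measurable set with 0 < |Q| < ∞. Suppose F_j, G_j : Q → ℝⁿ are square-integrable functions (j ∈ ℕ) with ∫_Q F_j = 0 and ∫_Q G_j = 0, such that the functions y ↦ |β + G_j(y) − σ(p + F_j(y))|² are integrable on Q and ∫_Q |β + G_j(y) − σ(p + F_j(y))|² dy → 0 as j → ∞. Then g(p, β) = 0, i.e., β ∈ Z(p). -/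

import Mathlib

open MeasureTheory

/-- If `σ` has linear growth, `g` is the convex hull of `(a, b) ↦ ‖σ(a) - b‖²`,
`F_j, G_j` are square-integrable with zero mean over `Q` (of finite positive measure),
and `∫_Q ‖β + G_j - σ(p + F_j)‖² → 0`, then `g(p, β) = 0`, i.e. `β ∈ Z(p)`. -/
theorem stmt8 (n N : ℕ) (hn : 1 ≤ n) (hN : 1 ≤ N)
    (σ : EuclideanSpace ℝ (Fin n) → EuclideanSpace ℝ (Fin n))
    (c₁ : ℝ) (hc₁ : 0 < c₁)
    (hσ : ∀ p, ‖σ p‖ ≤ c₁ * (‖p‖ + 1))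
    (g : EuclideanSpace ℝ (Fin n) × EuclideanSpace ℝ (Fin n) → ℝ)
    (hg_conv : ConvexOn ℝ Set.univ g)
    (hg_le : ∀ a b, g (a, b) ≤ ‖σ a - b‖ ^ 2)
    (hg_max : ∀ h : EuclideanSpace ℝ (Fin n) × EuclideanSpace ℝ (Fin n) → ℝ,
      ConvexOn ℝ Set.univ h → (∀ a b, h (a, b) ≤ ‖σ a - b‖ ^ 2) →
      ∀ a b, h (a, b) ≤ g (a, b))
    (p β : EuclideanSpace ℝ (Fin n))
    (Q : Set (EuclideanSpace ℝ (Fin N))) (hQm : MeasurableSet Q)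
    (hQ0 : 0 < volume Q) (hQtop : volume Q < ⊤)
    (F G : ℕ → EuclideanSpace ℝ (Fin N) → EuclideanSpace ℝ (Fin n))
    (hF : ∀ j, MemLp (F j) 2 (volume.restrict Q))
    (hG : ∀ j, MemLp (G j) 2 (volume.restrict Q))
    (hF0 : ∀ j, ∫ y in Q, F j y = 0) (hG0 : ∀ j, ∫ y in Q, G j y = 0)
    (hint : ∀ j, IntegrableOn (fun y => ‖β + G j y - σ (p + F j y)‖ ^ 2) Q)
    (hto0 : Filter.Tendsto (fun j => ∫ y in Q, ‖β + G j y - σ (p + F j y)‖ ^ 2)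
      Filter.atTop (nhds 0)) :
    g (p, β) = 0 := by
  set μ := volume.restrict Q with hμ
  haveI : IsFiniteMeasure μ := ⟨by rw [hμ, Measure.restrict_apply_univ]; exact hQtop⟩
  haveI : NeZero μ := ⟨by
    rw [← Measure.measure_univ_ne_zero, hμ, Measure.restrict_apply_univ]
    exact hQ0.ne'⟩
  -- g is nonnegative
  have hg0 : 0 ≤ g (p, β) := by
    have := hg_max (fun _ => 0) (convexOn_const 0 convex_univ)
      (fun a b => by positivity) p β
    simpa using this
  -- g is continuous
  have hgc : Continuous g := by
    have := hg_conv.continuousOn isOpen_univ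
    exact continuousOn_univ.mp this
  -- For each j, define f_j
  have key : ∀ j, g (p, β) ≤ (μ Set.univ).toReal⁻¹ •
      ∫ y in Q, ‖β + G j y - σ (p + F j y)‖ ^ 2 := by
    intro j
    set f : EuclideanSpace ℝ (Fin N) →
        EuclideanSpace ℝ (Fin n) × EuclideanSpace ℝ (Fin n) :=
      fun y => (p + F j y, β + G j y) with hf
    have hFi : Integrable (F j) μ := (hF j).integrable one_le_two
    have hGi : Integrable (G j) μ := (hG j).integrable one_le_two
    have hfi : Integrable f μ := by
      have h1 : Integrable (fun y => p + F j y) μ := (integrable_const p).add hFi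
      have h2 : Integrable (fun y => β + G j y) μ := (integrable_const β).add hGi
      exact h1.prodMk h2
    have hgfm : AEStronglyMeasurable (fun y => g (f y)) μ :=
      hgc.comp_aestronglyMeasurable hfi.aestronglyMeasurable
    have hbound : ∀ᵐ y ∂μ, ‖g (f y)‖ ≤ ‖β + G j y - σ (p + F j y)‖ ^ 2 := by
      filter_upwards with y
      rw [Real.norm_eq_abs, abs_of_nonneg]
      · have := hg_le (p + F j y) (β + G j y)
        calc g (f y) ≤ ‖σ (p + F j y) - (β + G j y)‖ ^ 2 := this
          _ = ‖β + G j y - σ (p + F j y)‖ ^ 2 := by rw [← norm_neg, neg_sub]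
      · have := hg_max (fun _ => 0) (convexOn_const 0 convex_univ)
          (fun a b => by positivity) (p + F j y) (β + G j y)
        simpa using this
    have hgi : Integrable (fun y => g (f y)) μ :=
      Integrable.mono' (hint j) hgfm hbound
    have havg : ⨍ y, f y ∂μ = (p, β) := by
      rw [average_eq, integral_pair hfi.fst hfi.snd]
      simp only [hf]
      rw [integral_add (integrable_const p) hFi, integral_add (integrable_const β) hGi]
      rw [hF0 j, hG0 j]
      simp only [add_zero, integral_const, smul_smul, Prod.smul_mk, smul_eq_mul]
      have hμu : (μ Set.univ).toReal ≠ 0 := by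
        rw [hμ, Measure.restrict_apply_univ]
        exact ENNReal.toReal_ne_zero.mpr ⟨hQ0.ne', hQtop.ne⟩
      rw [inv_mul_cancel₀ (show μ.real Set.univ ≠ 0 from hμu)]
      simp
    have hjensen := hg_conv.map_average_le hgc.continuousOn isClosed_univ
      (Filter.Eventually.of_forall fun x => Set.mem_univ (f x)) hfi hgi
    rw [havg] at hjensen
    calc g (p, β) ≤ ⨍ y, g (f y) ∂μ := hjensen
      _ = (μ Set.univ).toReal⁻¹ • ∫ y, g (f y) ∂μ := average_eq _ _
      _ ≤ (μ Set.univ).toReal⁻¹ • ∫ y in Q, ‖β + G j y - σ (p + F j y)‖ ^ 2 := by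
          refine smul_le_smul_of_nonneg_left ?_ (by positivity)
          refine integral_mono_of_nonneg ?_ (hint j) ?_
          · filter_upwards with y
            have := hg_max (fun _ => 0) (convexOn_const 0 convex_univ)
              (fun a b => by positivity) (p + F j y) (β + G j y)
            simpa using this
          · filter_upwards with y
            have := hg_le (p + F j y) (β + G j y)
            calc g (f y) ≤ ‖σ (p + F j y) - (β + G j y)‖ ^ 2 := this
              _ = ‖β + G j y - σ (p + F j y)‖ ^ 2 := by rw [← norm_neg, neg_sub]
  have hlim : Filter.Tendsto (fun j => (μ Set.univ).toReal⁻¹ •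
      ∫ y in Q, ‖β + G j y - σ (p + F j y)‖ ^ 2) Filter.atTop (nhds 0) := by
    have := hto0.const_smul ((μ Set.univ).toReal⁻¹)
    simpa using this
  have hle : g (p, β) ≤ 0 := ge_of_tendsto' hlim key
  linarith
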